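/- Every unit quaternion q can be written as q = a b a⁻¹ b⁻¹ for some nonzero quaternions a and b. -/

import Mathlib

open Quaternion

private lemma stmt4_comm_of (a b q : ℍ[ℝ]) (ha : a ≠ 0) (hb : b ≠ 0)
    (h : q * b * a = a * b) : q = a * b * a⁻¹ * b⁻¹ := by
  have h2 : a * b * a⁻¹ * b⁻¹ = (q * b * a) * a⁻¹ * b⁻¹ := by rw [h]
  rw [h2, mul_assoc (q * b), mul_inv_cancel₀ ha, mul_one, mul_assoc,
    mul_inv_cancel₀ hb, mul_one]

private lemma stmt4_key (x y z c t vx vy vz : ℝ)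
    (hs2 : (2*c*t)^2 = x^2+y^2+z^2) (he : c^2+t^2 = 1) (hdot : vx*x+vy*y+vz*z = 0) :
    (⟨2*c^2-1,x,y,z⟩ : ℍ[ℝ]) * ⟨0,vx,vy,vz⟩ * ⟨c*(2*c*t),t*x,t*y,t*z⟩
      = (⟨c*(2*c*t),t*x,t*y,t*z⟩ : ℍ[ℝ]) * ⟨0,vx,vy,vz⟩ := by
  simp only [QuaternionAlgebra.mk_mul_mk, QuaternionAlgebra.ext_iff]
  refine ⟨?_, ?_, ?_, ?_⟩
  · linear_combination (2*t - 4*c^2*t) * hdot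
  · linear_combination (4*c^2*t*vx) * he - t*vx*hs2 - 2*x*t*hdot
  · linear_combination (4*c^2*t*vy) * he - t*vy*hs2 - 2*y*t*hdot
  · linear_combination (4*c^2*t*vz) * he - t*vz*hs2 - 2*z*t*hdot

/-- Every unit quaternion is a commutator `a b a⁻¹ b⁻¹` of nonzero quaternions. -/
theorem stmt_4 (q : ℍ[ℝ]) (hq : ‖q‖ = 1) :
    ∃ a b : ℍ[ℝ], a ≠ 0 ∧ b ≠ 0 ∧ q = a * b * a⁻¹ * b⁻¹ := by
  set r := q.re with hr
  set x := q.imI with hx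
  set y := q.imJ with hy
  set z := q.imK with hz
  have hqmk : q = (⟨r, x, y, z⟩ : ℍ[ℝ]) := rfl
  have hq4 : r ^ 2 + x ^ 2 + y ^ 2 + z ^ 2 = 1 := by
    have h := Quaternion.normSq_eq_norm_mul_self q
    rw [hq, Quaternion.normSq_def'] at h
    linarith [h]
  by_cases him : x = 0 ∧ y = 0 ∧ z = 0
  · -- `q = 1` or `q = -1`
    obtain ⟨h1, h2, h3⟩ := him
    have hr2 : (r - 1) * (r + 1) = 0 := by
      rw [h1, h2, h3] at hq4; nlinarith [hq4]
    rcases mul_eq_zero.mp hr2 with h | h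
    · -- q = 1
      refine ⟨1, 1, one_ne_zero, one_ne_zero, ?_⟩
      have : q = 1 := by
        rw [hqmk, h1, h2, h3]
        have : r = 1 := by linarith
        rw [this]; rfl
      simp [this]
    · -- q = -1
      refine ⟨⟨0,1,0,0⟩, ⟨0,0,1,0⟩, ?_, ?_, ?_⟩
      · intro hc; simpa using congrArg QuaternionAlgebra.imI hc
      · intro hc; simpa using congrArg QuaternionAlgebra.imJ hc
      · apply stmt4_comm_of
        · intro hc; simpa using congrArg QuaternionAlgebra.imI hc
        · intro hc; simpa using congrArg QuaternionAlgebra.imJ hc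
        · have hrv : r = -1 := by linarith
          rw [hqmk, h1, h2, h3, hrv]
          show (⟨-1,0,0,0⟩ : ℍ[ℝ]) * ⟨0,0,1,0⟩ * ⟨0,1,0,0⟩ = (⟨0,1,0,0⟩ : ℍ[ℝ]) * ⟨0,0,1,0⟩
          simp only [QuaternionAlgebra.mk_mul_mk, QuaternionAlgebra.ext_iff]
          norm_num
  · -- `q` has nonzero imaginary part
    have hspos : 0 < x ^ 2 + y ^ 2 + z ^ 2 := by
      rcases not_and_or.mp him with h | h
      · positivity
      rcases not_and_or.mp h with h' | h'
      · positivity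
      · positivity
    have hrlt : r ^ 2 < 1 := by linarith
    have hr1 : -1 < r := by nlinarith
    have hr2 : r < 1 := by nlinarith
    set c := Real.sqrt ((1 + r) / 2) with hcdef
    set t := Real.sqrt ((1 - r) / 2) with htdef
    have hc2 : c ^ 2 = (1 + r) / 2 := Real.sq_sqrt (by linarith)
    have ht2 : t ^ 2 = (1 - r) / 2 := Real.sq_sqrt (by linarith)
    have hcpos : 0 < c := Real.sqrt_pos.mpr (by linarith)
    have htpos : 0 < t := Real.sqrt_pos.mpr (by linarith)
    have he : c ^ 2 + t ^ 2 = 1 := by rw [hc2, ht2]; ring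
    have hs2 : (2 * c * t) ^ 2 = x ^ 2 + y ^ 2 + z ^ 2 := by
      have : (2 * c * t) ^ 2 = 4 * (c ^ 2) * (t ^ 2) := by ring
      rw [this, hc2, ht2]; nlinarith [hq4]
    have hrval : r = 2 * c ^ 2 - 1 := by rw [hc2]; ring
    have hqmk' : q = (⟨2 * c ^ 2 - 1, x, y, z⟩ : ℍ[ℝ]) := by rw [hqmk, hrval]
    have hpne : (⟨c * (2 * c * t), t * x, t * y, t * z⟩ : ℍ[ℝ]) ≠ 0 := by
      intro hc0
      have h0 : c * (2 * c * t) = 0 := by simpa using congrArg QuaternionAlgebra.re hc0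
      nlinarith [h0, hcpos, htpos]
    by_cases hxy : x = 0 ∧ y = 0
    · obtain ⟨h1, h2⟩ := hxy
      refine ⟨⟨c * (2 * c * t), t * x, t * y, t * z⟩, ⟨0, 1, 0, 0⟩, hpne, ?_, ?_⟩
      · intro hc0; simpa using congrArg QuaternionAlgebra.imI hc0
      · apply stmt4_comm_of _ _ _ hpne
        · intro hc0; simpa using congrArg QuaternionAlgebra.imI hc0
        · rw [hqmk']
          exact stmt4_key x y z c t 1 0 0 hs2 he (by rw [h1]; ring)
    · refine ⟨⟨c * (2 * c * t), t * x, t * y, t * z⟩, ⟨0, -y, x, 0⟩, hpne, ?_, ?_⟩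
      · intro hc0
        rcases not_and_or.mp hxy with h | h
        · exact h (by simpa using congrArg QuaternionAlgebra.imJ hc0)
        · exact h (by have := congrArg QuaternionAlgebra.imI hc0; simp at this; linarith)
      · apply stmt4_comm_of _ _ _ hpne
        · intro hc0
          rcases not_and_or.mp hxy with h | h
          · exact h (by simpa using congrArg QuaternionAlgebra.imJ hc0)
          · exact h (by have := congrArg QuaternionAlgebra.imI hc0; simp at this; linarith)
        · rw [hqmk']
          exact stmt4_key x y z c t (-y) x 0 hs2 he (by ring)
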